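/- Let 0 < p < 1/2, ε > 0, 0 < α < v(p), β > 1, q := ⌈v(p)/(1−v(p))⌉ and m ≥ q, and let ν₀ = δ₀, ν₁, …, ν_m be an (ε,α,β)-admissible sequence of measures. Set K := Σ_{i=0}^{m−1} #supp(ν_i) and δ := 1 − exp(−log(β)/m). Let B be the event that min X^N_i < (v(p) − α)·i for all 1 ≤ i ≤ m. Then P(B) ≤ 2K·exp(−N·β^{−1}·ε·p·δ²). -/

import Mathlib

open MeasureTheory ProbabilityTheory Filter

noncomputable section

/-- The random walk step distribution `p·δ₁ + (1−p)·δ₀` on `ℤ`. -/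
def bernoulliStep (p : ℝ) : Measure ℤ :=
  ENNReal.ofReal p • Measure.dirac 1 + ENNReal.ofReal (1 - p) • Measure.dirac 0

/-- One branching-selection step: each of the `N` particles at positions `x i` branches into
two particles, displaced by `y i 0` and `y i 1` respectively; of the `2N` resulting particles
only the `N` rightmost are kept, listed in decreasing order. -/
def nextPop (N : ℕ) (x : Fin N → ℤ) (y : Fin N → Fin 2 → ℤ) : Fin N → ℤ :=
  fun i =>
    (((Finset.univ.val.map fun q : Fin N × Fin 2 => x q.1 + y q.1 q.2).sort (· ≥ ·)).getD i 0)

variable {Ω : Type*}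

/-- The branching-selection particle system with `N` particles driven by the noise family `Y`
(`Y n i ℓ` is the displacement of the `ℓ`-th offspring of the `i`-th particle at time `n`),
started from `N` particles at the origin. -/
def chain (N : ℕ) (Y : ℕ → ℕ → Fin 2 → Ω → ℤ) : ℕ → Ω → Fin N → ℤ
  | 0 => fun _ _ => 0
  | n + 1 => fun ω => nextPop N (chain N Y n ω) fun i ℓ => Y n i.val ℓ ω

/-- Maximal position in a population. -/
def maxPop {N : ℕ} (x : Fin N → ℤ) : ℤ :=
  ((Finset.univ.val.map x).sort (· ≤ ·)).getLastD 0

/-- Minimal position in a population. -/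
def minPop {N : ℕ} (x : Fin N → ℤ) : ℤ :=
  ((Finset.univ.val.map x).sort (· ≤ ·)).headD 0

/-- The large deviations rate function `Λ` for sums of i.i.d. Bernoulli(`p`) variables. -/
def rateFn (p x : ℝ) : ℝ :=
  x * Real.log (x / p) + (1 - x) * Real.log ((1 - x) / (1 - p))

/-- `a_m = ⌊m^{1/3}⌋`. -/
def am (m : ℕ) : ℕ := ⌊(m : ℝ) ^ ((1 : ℝ) / 3)⌋₊

/-- `c_m = ⌊m^{2/3}⌋`. -/
def cm (m : ℕ) : ℕ := ⌊(m : ℝ) ^ ((2 : ℝ) / 3)⌋₊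

/-- `s_m = ⌊a_m / (2(1 − v(p)))⌋`. -/
def sm (vp : ℝ) (m : ℕ) : ℕ := ⌊(am m : ℝ) / (2 * (1 - vp))⌋₊

/-- The upper barrier `d_m`. -/
def dBar (vp : ℝ) (m k : ℕ) : ℝ :=
  if k ≤ sm vp m then (k : ℝ) else vp * k + am m

/-- The lower barrier `g_m`. -/
def gBar (vp : ℝ) (A m k : ℕ) : ℝ :=
  if k ≤ sm vp m then (k : ℝ)
  else if k ≤ m - cm m then vp * ((k : ℝ) + 1)
  else vp * k - A * am m

/-- The random walk with increments `ξ`, started at `0`. -/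
def walk {Ω : Type*} (ξ : ℕ → Ω → ℤ) (k : ℕ) (ω : Ω) : ℤ :=
  ∑ j ∈ Finset.range k, ξ j ω

/-- `q = ⌈v(p)/(1 − v(p))⌉`. -/
def qval (vp : ℝ) : ℕ := ⌈vp / (1 - vp)⌉₊

/-- The infinite-population branching operator `F^{Br.}(ν) = 2·ν ⋆ (p·δ₁ + (1−p)·δ₀)`. -/
def FBr (p : ℝ) (ν : ℤ → ℝ) : ℤ → ℝ :=
  fun x => 2 * (p * ν (x - 1) + (1 - p) * ν x)

/-- An `(ε,α,β)`-admissible sequence `ν₀ = δ₀, ν₁, …, ν_m` of finitely supported positive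
measures on `ℤ` (a measure is represented by its density `ℤ → ℝ`): (i) `ν_i = (2p)^i·δ_i`
for `i ≤ q`; (ii) `ν_i ≤ F^{Br.}(ν_{i−1})` for `q+1 ≤ i ≤ m`; (iii) every point with
positive mass of `ν_i`, `i ≤ m−1`, has mass at least `ε`; (iv) for `q ≤ i ≤ m−1` the
support of `ν_i` lies in `[(v(p)−α)(i+1), ∞)`; (v) `ν_m(ℤ) ≥ β + 1`. -/
def Admissible (p vp ε α β : ℝ) (m : ℕ) (ν : ℕ → ℤ → ℝ) : Prop :=
  (∀ i x, 0 ≤ ν i x) ∧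
  (∀ i, (Function.support (ν i)).Finite) ∧
  (∀ i ≤ qval vp, ∀ x : ℤ, ν i x = if x = (i : ℤ) then (2 * p) ^ i else 0) ∧
  (∀ i : ℕ, qval vp + 1 ≤ i → i ≤ m → ∀ x : ℤ, ν i x ≤ FBr p (ν (i - 1)) x) ∧
  (∀ i ≤ m - 1, ∀ x : ℤ, 0 < ν i x → ε ≤ ν i x) ∧
  (∀ i : ℕ, qval vp ≤ i → i ≤ m - 1 → ∀ x : ℤ,
    0 < ν i x → (vp - α) * ((i : ℝ) + 1) ≤ (x : ℝ)) ∧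
  (β + 1 ≤ ∑ᶠ x : ℤ, ν m x)

/-- deterministic chain driven by a fixed noise realization -/
def chainAux (N : ℕ) (f : ℕ → ℕ → Fin 2 → ℤ) : ℕ → Fin N → ℤ
  | 0 => fun _ => 0
  | n + 1 => nextPop N (chainAux N f n) (fun j ℓ => f n j.val ℓ)

/-- population multiset -/
def popMS {N : ℕ} (x : Fin N → ℤ) : Multiset ℤ := Finset.univ.val.map x

def childMS {N : ℕ} (x : Fin N → ℤ) (y : Fin N → Fin 2 → ℤ) : Multiset ℤ :=
  Finset.univ.val.map (fun q : Fin N × Fin 2 => x q.1 + y q.1 q.2)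

lemma popMS_card {N : ℕ} (x : Fin N → ℤ) : Multiset.card (popMS x) = N := by
  simp [popMS]

lemma childMS_card {N : ℕ} (x : Fin N → ℤ) (y : Fin N → Fin 2 → ℤ) :
    Multiset.card (childMS x y) = 2 * N := by
  simp only [childMS, Multiset.card_map]
  rw [Finset.card_val, Finset.card_univ, Fintype.card_prod, Fintype.card_fin, Fintype.card_fin]
  omega

lemma ofFn_getD_eq_take {l : List ℤ} {N : ℕ} (h : N ≤ l.length) :
    (List.ofFn fun i : Fin N => l.getD i 0) = l.take N := by
  apply List.ext_getElem
  · simp [Nat.min_eq_left h]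
  · intro k h1 h2
    simp only [List.getElem_ofFn, List.getElem_take]
    simp only [List.length_ofFn] at h1
    exact List.getD_eq_getElem _ _ (by omega)

lemma popMS_nextPop {N : ℕ} (x : Fin N → ℤ) (y : Fin N → Fin 2 → ℤ) :
    popMS (nextPop N x y) = ↑((((childMS x y).sort (· ≥ ·)).take N) : List ℤ) := by
  have hlen : N ≤ ((childMS x y).sort (· ≥ ·)).length := by
    rw [Multiset.length_sort, childMS_card]; omega
  rw [popMS, Fin.univ_val_map]
  rw [show (nextPop N x y) = (fun i : Fin N => (((childMS x y).sort (· ≥ ·)).getD i 0)) from rfl]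
  rw [ofFn_getD_eq_take hlen]

lemma minPop_mem {N : ℕ} (hN : 1 ≤ N) (x : Fin N → ℤ) : minPop x ∈ popMS x := by
  have hlen : ((popMS x).sort (· ≤ ·)).length = N := by
    rw [Multiset.length_sort, popMS_card]
  have hne : ((popMS x).sort (· ≤ ·)) ≠ [] := by
    intro h; rw [h] at hlen; simp at hlen; omega
  have : minPop x ∈ ((popMS x).sort (· ≤ ·)) := by
    rw [minPop]
    rw [show (Finset.univ.val.map x) = popMS x from rfl]
    cases hl : ((popMS x).sort (· ≤ ·)) with
    | nil => exact absurd hl hne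
    | cons a l => simp
  rwa [Multiset.mem_sort] at this

lemma minPop_le {N : ℕ} (x : Fin N → ℤ) {z : ℤ} (hz : z ∈ popMS x) : minPop x ≤ z := by
  have hs : ((popMS x).sort (· ≤ ·)).Pairwise (· ≤ ·) := Multiset.pairwise_sort _ _
  rw [← Multiset.mem_sort (r := (· ≤ ·))] at hz
  set l := ((popMS x).sort (· ≤ ·)) with hl
  obtain ⟨k, hk, hkz⟩ := List.getElem_of_mem hz
  have hne : l ≠ [] := List.ne_nil_of_mem hz
  have hminPop : minPop x = l.headD 0 := rfl
  rw [hminPop, List.headD_eq_head?, List.head?_eq_getElem?]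
  have h0 : l[0]? = some l[0] := by
    rw [List.getElem?_eq_getElem]
  rw [h0]
  simp only [Option.getD_some]
  rcases Nat.eq_zero_or_pos k with hk0 | hk0
  · subst hk0; omega
  · have := (List.pairwise_iff_getElem.mp hs) 0 k (by omega) hk hk0
    omega

lemma count_nextPop_le {N : ℕ} (x : Fin N → ℤ) (y : Fin N → Fin 2 → ℤ) (z : ℤ) :
    Multiset.count z (popMS (nextPop N x y)) ≤ Multiset.count z (childMS x y) := by
  rw [popMS_nextPop]
  conv_rhs => rw [← Multiset.sort_eq (childMS x y) (· ≥ ·)]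
  rw [Multiset.coe_count, Multiset.coe_count]
  exact ((childMS x y).sort (· ≥ ·)).take_sublist N |>.count_le z

lemma count_nextPop_eq {N : ℕ} (hN : 1 ≤ N) (x : Fin N → ℤ) (y : Fin N → Fin 2 → ℤ)
    {z : ℤ} (hz : minPop (nextPop N x y) < z) :
    Multiset.count z (popMS (nextPop N x y)) = Multiset.count z (childMS x y) := by
  set l := ((childMS x y).sort (· ≥ ·)) with hldef
  have hlen : l.length = 2 * N := by rw [hldef, Multiset.length_sort, childMS_card]
  have hNle : N ≤ l.length := by omega
  have hsorted : l.Pairwise (· ≥ ·) := Multiset.pairwise_sort _ _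
  have hpop : popMS (nextPop N x y) = ↑(l.take N) := popMS_nextPop x y
  rw [hpop]
  conv_rhs => rw [← Multiset.sort_eq (childMS x y) (· ≥ ·)]
  rw [Multiset.coe_count, Multiset.coe_count, ← hldef]
  conv_rhs => rw [← List.take_append_drop N l]
  rw [List.count_append]
  have hdrop : (l.drop N).count z = 0 := by
    rw [List.count_eq_zero]
    intro hmem
    obtain ⟨j, hj, hjz⟩ := List.getElem_of_mem hmem
    rw [List.getElem_drop] at hjz
    -- minPop is an element of take N l
    have hmp : minPop (nextPop N x y) ∈ popMS (nextPop N x y) := minPop_mem hN _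
    rw [hpop, Multiset.mem_coe] at hmp
    obtain ⟨k, hk, hkz⟩ := List.getElem_of_mem hmp
    rw [List.getElem_take] at hkz
    have hklt : k < N := by
      have := hk; rwa [List.length_take, Nat.min_eq_left hNle] at this
    have hrel := (List.pairwise_iff_getElem.mp hsorted) k (N + j) (by
        have := hj; rw [List.length_drop] at this; omega) (by
        have := hj; rw [List.length_drop] at this; omega) (by omega)
    rw [hkz, hjz] at hrel
    omega
  omega

lemma count_childMS_ge {N : ℕ} (x : Fin N → ℤ) (y : Fin N → Fin 2 → ℤ) (z : ℤ) :
    (Finset.univ.filter (fun q : Fin N × Fin 2 => x q.1 = z - 1 ∧ y q.1 q.2 = 1)).card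
      + (Finset.univ.filter (fun q : Fin N × Fin 2 => x q.1 = z ∧ y q.1 q.2 = 0)).card
      ≤ Multiset.count z (childMS x y) := by
  classical
  have hcnt : Multiset.count z (childMS x y)
      = (Finset.univ.filter (fun q : Fin N × Fin 2 => z = x q.1 + y q.1 q.2)).card := by
    rw [childMS, Multiset.count_map]
    rfl
  rw [hcnt]
  set A := Finset.univ.filter (fun q : Fin N × Fin 2 => x q.1 = z - 1 ∧ y q.1 q.2 = 1) with hA
  set B := Finset.univ.filter (fun q : Fin N × Fin 2 => x q.1 = z ∧ y q.1 q.2 = 0) with hB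
  have hdisj : Disjoint A B := by
    rw [Finset.disjoint_left]
    intro q hqA hqB
    rw [hA, Finset.mem_filter] at hqA
    rw [hB, Finset.mem_filter] at hqB
    omega
  have hsub : A ∪ B ⊆ Finset.univ.filter (fun q : Fin N × Fin 2 => z = x q.1 + y q.1 q.2) := by
    intro q hq
    rw [Finset.mem_union] at hq
    rcases hq with h | h <;> rw [Finset.mem_filter] at h ⊢ <;>
      exact ⟨Finset.mem_univ _, by omega⟩
  calc A.card + B.card = (A ∪ B).card := (Finset.card_union_of_disjoint hdisj).symm
    _ ≤ _ := Finset.card_le_card hsub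


/-- The calculus inequality for the lower-tail Chernoff bound. -/
lemma chernoff_calc {δ : ℝ} (h0 : 0 ≤ δ) (h1 : δ < 1) :
    δ ^ 2 / 2 ≤ δ + (1 - δ) * Real.log (1 - δ) := by
  set φ : ℝ → ℝ := fun u => u + (1 - u) * Real.log (1 - u) - u ^ 2 / 2 with hφ
  have key : ∀ u ∈ Set.Ico (0:ℝ) 1, HasDerivAt φ (-Real.log (1 - u) - u) u := by
    intro u hu
    have hu1 : (1:ℝ) - u ≠ 0 := by
      have := hu.2; intro h; simp only [Set.mem_Ico] at hu; nlinarith [hu.1, hu.2]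
    have h2 : HasDerivAt (fun v : ℝ => 1 - v) (-1) u := by
      simpa using (hasDerivAt_id u).const_sub 1
    have h3 : HasDerivAt (fun v : ℝ => Real.log (1 - v)) ((1 - u)⁻¹ * (-1)) u :=
      (Real.hasDerivAt_log hu1).comp u h2
    have h4 : HasDerivAt (fun v : ℝ => (1 - v) * Real.log (1 - v))
        ((-1) * Real.log (1 - u) + (1 - u) * ((1 - u)⁻¹ * (-1))) u := h2.mul h3
    have h5 : HasDerivAt (fun v : ℝ => v ^ 2 / 2) u u := by
      have := (hasDerivAt_pow 2 u).div_const 2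
      simpa using this
    have h6 := ((hasDerivAt_id u).add h4).sub h5
    convert h6 using 1
    · rfl
    · rfl
    · rfl
    rw [mul_inv_cancel_left₀ hu1]
    ring
  have hmono : MonotoneOn φ (Set.Icc 0 δ) := by
    rcases eq_or_lt_of_le h0 with h | hδpos
    · intro a ha b hb hab
      have : a = 0 := le_antisymm (by simpa [← h] using ha.2) ha.1
      have hb0 : b = 0 := le_antisymm (by simpa [← h] using hb.2) hb.1
      rw [this, hb0]
    · apply monotoneOn_of_deriv_nonneg (convex_Icc 0 δ)
      · -- continuity
        apply ContinuousOn.sub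
        apply ContinuousOn.add continuousOn_id
        · apply ContinuousOn.mul (by fun_prop)
          apply ContinuousOn.comp Real.continuousOn_log (by fun_prop)
          intro u hu
          simp only [Set.mem_compl_iff, Set.mem_singleton_iff]
          have := hu.2
          intro hc
          simp only [Set.mem_Icc] at hu
          nlinarith [hu.1, hu.2]
        · fun_prop
      · intro u hu
        rw [interior_Icc] at hu
        have hu' : u ∈ Set.Ico (0:ℝ) 1 := ⟨le_of_lt hu.1, lt_of_lt_of_le hu.2 (le_of_lt h1)⟩
        exact ((key u hu').differentiableAt).differentiableWithinAt
      · intro u hu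
        rw [interior_Icc] at hu
        have hu' : u ∈ Set.Ico (0:ℝ) 1 := ⟨le_of_lt hu.1, lt_of_lt_of_le hu.2 (le_of_lt h1)⟩
        rw [(key u hu').deriv]
        have hlog : Real.log (1 - u) ≤ (1 - u) - 1 :=
          Real.log_le_sub_one_of_pos (by nlinarith [hu'.1, hu'.2])
        nlinarith
  have h2 := hmono (Set.left_mem_Icc.2 h0) (Set.right_mem_Icc.2 h0) h0
  have hφ0 : φ 0 = 0 := by simp [hφ]
  rw [hφ0] at h2
  simp only [hφ] at h2
  linarith

/-- Integral against the Bernoulli step distribution. -/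
lemma integral_bernoulliStep {p : ℝ} (hp0 : 0 ≤ p) (hp1 : p ≤ 1) (f : ℤ → ℝ) :
    ∫ z, f z ∂(bernoulliStep p) = p * f 1 + (1 - p) * f 0 := by
  have hsm : StronglyMeasurable f := (Measurable.of_discrete (f := f)).stronglyMeasurable
  have hint1 : Integrable f (Measure.dirac (1:ℤ)) := by
    refine Integrable.mono' (integrable_const ‖f 1‖) hsm.aestronglyMeasurable ?_
    rw [ae_dirac_eq]
    exact Filter.eventually_pure.2 (le_refl _)
  have hint0 : Integrable f (Measure.dirac (0:ℤ)) := by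
    refine Integrable.mono' (integrable_const ‖f 0‖) hsm.aestronglyMeasurable ?_
    rw [ae_dirac_eq]
    exact Filter.eventually_pure.2 (le_refl _)
  rw [bernoulliStep, integral_add_measure (hint1.smul_measure ENNReal.ofReal_ne_top)
    (hint0.smul_measure ENNReal.ofReal_ne_top), integral_smul_measure, integral_smul_measure,
    integral_dirac, integral_dirac, ENNReal.toReal_ofReal hp0,
    ENNReal.toReal_ofReal (by linarith : (0:ℝ) ≤ 1 - p)]
  simp [smul_eq_mul]

/-- Reindexing an independent family along an injective map. -/
lemma iIndepFun_precomp {Ω ι ι' β : Type*} {mΩ : MeasurableSpace Ω} {μ : Measure Ω}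
    {mβ : MeasurableSpace β} {f : ι → Ω → β}
    (g : ι' → ι) (hg : Function.Injective g)
    (h : iIndepFun (m := fun _ => mβ) f μ) :
    iIndepFun (m := fun _ => mβ) (fun i' => f (g i')) μ := by
  classical
  rw [iIndepFun_iff_measure_inter_preimage_eq_mul] at h ⊢
  intro S sets hsets
  set sets' : ι → Set β := fun i =>
    if h : ∃ i' ∈ S, g i' = i then sets h.choose else Set.univ with hsets'def
  have hkey : ∀ i' ∈ S, sets' (g i') = sets i' := by
    intro i' hi'
    have hex : ∃ j ∈ S, g j = g i' := ⟨i', hi', rfl⟩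
    simp only [hsets'def, dif_pos hex]
    obtain ⟨hmem, heq⟩ := hex.choose_spec
    rw [hg heq]
  have h1 := h (S.image g) (sets := sets') ?_
  · have h2 : (⋂ i ∈ S.image g, f i ⁻¹' sets' i) = ⋂ i' ∈ S, (fun ω => f (g i') ω) ⁻¹' sets i' := by
      ext ω
      simp only [Set.mem_iInter, Finset.mem_image]
      constructor
      · intro hall i' hi'
        have := hall (g i') ⟨i', hi', rfl⟩
        rwa [hkey i' hi'] at this
      · rintro hall i ⟨i', hi', rfl⟩
        rw [hkey i' hi']
        exact hall i' hi'
    rw [h2] at h1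
    rw [h1, Finset.prod_image (fun a _ b _ hab => hg hab)]
    exact Finset.prod_congr rfl fun i' hi' => by rw [hkey i' hi']
  · intro i hi
    simp only [hsets'def]
    split
    · next hex =>
      obtain ⟨hmem, heq⟩ := hex.choose_spec
      exact hsets _ hmem
    · exact MeasurableSet.univ

/-- Transporting mutual independence along a.e. equality. -/
lemma iIndepFun_congr_ae {Ω ι β : Type*} {mΩ : MeasurableSpace Ω} {μ : Measure Ω}
    {mβ : MeasurableSpace β} {f g : ι → Ω → β}
    (hfg : ∀ i, f i =ᵐ[μ] g i) (h : iIndepFun (m := fun _ => mβ) f μ) :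
    iIndepFun (m := fun _ => mβ) g μ := by
  rw [iIndepFun_iff_measure_inter_preimage_eq_mul] at h ⊢
  intro S sets hsets
  have hae : ∀ᵐ ω ∂μ, ∀ i ∈ S, f i ω = g i ω :=
    (ae_ball_iff S.countable_toSet).2 (fun i _ => hfg i)
  have h1 : μ (⋂ i ∈ S, g i ⁻¹' sets i) = μ (⋂ i ∈ S, f i ⁻¹' sets i) := by
    apply measure_congr
    rw [Filter.eventuallyEq_set]
    filter_upwards [hae] with ω hω
    simp only [Set.mem_iInter, Set.mem_preimage]
    exact ⟨fun hl i hi => by rw [hω i hi]; exact hl i hi,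
      fun hl i hi => by rw [← hω i hi]; exact hl i hi⟩
  rw [h1, h S hsets]
  apply Finset.prod_congr rfl
  intro i hi
  apply measure_congr
  rw [Filter.eventuallyEq_set]
  filter_upwards [hfg i] with ω hω
  simp [Set.mem_preimage, hω]


/-- mgf of the indicator that a `bernoulliStep` variable equals `d`. -/
lemma mgf_bernoulli_indicator {Ω : Type*} [MeasureSpace Ω] [IsProbabilityMeasure (ℙ : Measure Ω)]
    {W : Ω → ℤ} (hW : Measurable W) {p : ℝ} (hp0 : 0 ≤ p) (hp1 : p ≤ 1)
    (hlaw : Measure.map W ℙ = bernoulliStep p) (d : ℤ) (hd : d = 0 ∨ d = 1) (t : ℝ) :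
    mgf (fun ω => if W ω = d then (1 : ℝ) else 0) ℙ t
      = (if d = 1 then p else 1 - p) * Real.exp t + (1 - (if d = 1 then p else 1 - p)) := by
  have hmeasg : Measurable (fun z : ℤ => Real.exp (t * (if z = d then (1:ℝ) else 0))) :=
    Measurable.of_discrete
  have h1 : mgf (fun ω => if W ω = d then (1 : ℝ) else 0) ℙ t
      = ∫ z, Real.exp (t * (if z = d then (1:ℝ) else 0)) ∂(Measure.map W ℙ) := by
    rw [mgf, integral_map hW.aemeasurable hmeasg.aestronglyMeasurable]
  rw [h1, hlaw, integral_bernoulliStep hp0 hp1]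
  rcases hd with h | h <;> subst h <;> norm_num <;> ring

/-- Chernoff lower-tail bound for a sum of i.i.d. `{0,1}`-valued random variables. -/
lemma chernoff_binom {Ω : Type*} [MeasureSpace Ω] [IsProbabilityMeasure (ℙ : Measure Ω)]
    {ι : Type*} [Fintype ι] (Z : ι → Ω → ℝ)
    (hmeas : ∀ k, Measurable (Z k))
    (hindep : iIndepFun Z ℙ)
    (hval : ∀ k ω, Z k ω = 0 ∨ Z k ω = 1)
    (r : ℝ) (hr0 : 0 < r) (hr1 : r ≤ 1)
    (hmgf : ∀ t, ∀ k, mgf (Z k) ℙ t = r * Real.exp t + (1 - r))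
    (δ : ℝ) (hδ0 : 0 < δ) (hδ1 : δ < 1) :
    ℙ {ω | (∑ k, Z k ω) ≤ (1 - δ) * r * (Fintype.card ι : ℝ)}
      ≤ ENNReal.ofReal (Real.exp (-(Fintype.card ι : ℝ) * r * δ ^ 2 / 2)) := by
  classical
  set M : ℕ := Fintype.card ι with hM
  set t : ℝ := Real.log (1 - δ) with ht
  have h1δ : (0:ℝ) < 1 - δ := by linarith
  have htneg : t ≤ 0 := le_of_lt (Real.log_neg h1δ (by linarith))
  have hexpt : Real.exp t = 1 - δ := Real.exp_log h1δ
  set X : Ω → ℝ := ∑ k, Z k with hX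
  have hXapp : ∀ ω, X ω = ∑ k, Z k ω := fun ω => by rw [hX]; simp
  have hXmeas : Measurable X := by
    have h := Finset.measurable_sum (f := Z) Finset.univ (fun k _ => hmeas k)
    have heq : X = fun ω => ∑ k ∈ Finset.univ, Z k ω := by funext ω; rw [hXapp]
    rw [heq]; exact h
  have hint : Integrable (fun ω => Real.exp (t * X ω)) ℙ := by
    apply Integrable.mono' (integrable_const (Real.exp (|t| * M)))
    · exact ((hXmeas.const_mul t).exp).aestronglyMeasurable
    · apply ae_of_all
      intro ω
      rw [Real.norm_eq_abs, abs_of_pos (Real.exp_pos _)]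
      apply Real.exp_le_exp.2
      have hXω : 0 ≤ X ω ∧ X ω ≤ M := by
        rw [hXapp]
        constructor
        · apply Finset.sum_nonneg; intro k _; rcases hval k ω with h | h <;> rw [h] <;> norm_num
        · have hle : ∑ k, Z k ω ≤ ∑ _k : ι, (1:ℝ) := by
            apply Finset.sum_le_sum
            intro k _
            rcases hval k ω with h | h <;> rw [h] <;> norm_num
          simpa [hM] using hle
      have ha1 : t * X ω ≤ |t| * |X ω| := by rw [← abs_mul]; exact le_abs_self _
      have ha2 : |X ω| ≤ (M : ℝ) := abs_le.2 ⟨by linarith [hXω.1], hXω.2⟩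
      calc t * X ω ≤ |t| * |X ω| := ha1
        _ ≤ |t| * M := mul_le_mul_of_nonneg_left ha2 (abs_nonneg t)
  have hbound := measure_le_le_exp_mul_mgf (μ := ℙ) (X := X) ((1 - δ) * r * M) htneg hint
  have hmgfX : mgf X ℙ t = (r * Real.exp t + (1 - r)) ^ M := by
    rw [hX, show (∑ k, Z k) = ∑ k ∈ Finset.univ, Z k from rfl,
      hindep.mgf_sum hmeas Finset.univ]
    rw [Finset.prod_congr rfl (fun k _ => hmgf t k), Finset.prod_const]
    simp [hM]
  rw [hmgfX, hexpt] at hbound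
  -- real-number estimate
  have hrδ : (0:ℝ) < 1 - r * δ := by nlinarith
  have hstep1 : (r * (1 - δ) + (1 - r)) = 1 - r * δ := by ring
  rw [hstep1] at hbound
  have hM0 : (0:ℝ) ≤ M := Nat.cast_nonneg M
  have hre : Real.exp (-t * ((1 - δ) * r * M)) * (1 - r * δ) ^ M
      ≤ Real.exp (-(M : ℝ) * r * δ ^ 2 / 2) := by
    have hp1 : (1 - r * δ) ^ M ≤ Real.exp (-(r * δ)) ^ M := by
      apply pow_le_pow_left₀ (le_of_lt hrδ)
      nlinarith [Real.add_one_le_exp (-(r * δ))]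
    have hp2 : Real.exp (-(r * δ)) ^ M = Real.exp (-(r * δ) * M) := by
      rw [← Real.exp_nat_mul]; ring_nf
    calc Real.exp (-t * ((1 - δ) * r * M)) * (1 - r * δ) ^ M
        ≤ Real.exp (-t * ((1 - δ) * r * M)) * Real.exp (-(r * δ) * M) := by
          rw [hp2] at hp1
          exact mul_le_mul_of_nonneg_left hp1 (le_of_lt (Real.exp_pos _))
      _ = Real.exp (-t * ((1 - δ) * r * M) + (-(r * δ) * M)) := by rw [← Real.exp_add]
      _ ≤ Real.exp (-(M : ℝ) * r * δ ^ 2 / 2) := by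
          apply Real.exp_le_exp.2
          have hcalc := chernoff_calc (le_of_lt hδ0) hδ1
          rw [ht]
          nlinarith [mul_nonneg (mul_nonneg hM0 (le_of_lt hr0)) (sq_nonneg δ),
            mul_le_mul_of_nonneg_left hcalc (mul_nonneg hM0 (le_of_lt hr0))]
  have hfinal : (ℙ {ω | X ω ≤ (1 - δ) * r * M}).toReal
      ≤ Real.exp (-(M : ℝ) * r * δ ^ 2 / 2) := le_trans hbound hre
  have hsetd : {ω | (∑ k, Z k ω) ≤ (1 - δ) * r * (M : ℝ)} = {ω | X ω ≤ (1 - δ) * r * M} := by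
    ext ω; rw [Set.mem_setOf_eq, Set.mem_setOf_eq, hXapp]
  rw [hsetd]
  rw [← ENNReal.ofReal_toReal (measure_ne_top ℙ _)]
  exact ENNReal.ofReal_le_ofReal hfinal



lemma chain_eq_chainAux {Ω : Type*} (N : ℕ) (Y : ℕ → ℕ → Fin 2 → Ω → ℤ) :
    ∀ (i : ℕ) (ω : Ω), chain N Y i ω = chainAux N (fun n j ℓ => Y n j ℓ ω) i
  | 0, ω => rfl
  | (i+1), ω => by
      have h1 : chain N Y (i+1) ω = nextPop N (chain N Y i ω) (fun j ℓ => Y i j.val ℓ ω) := rfl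
      have h2 : chainAux N (fun n j ℓ => Y n j ℓ ω) (i+1)
          = nextPop N (chainAux N (fun n j ℓ => Y n j ℓ ω) i) (fun j ℓ => Y i j.val ℓ ω) := rfl
      rw [h1, h2, chain_eq_chainAux N Y i ω]

lemma chainAux_congr (N : ℕ) (f g : ℕ → ℕ → Fin 2 → ℤ) :
    ∀ (i : ℕ), (∀ n < i, ∀ j < N, ∀ ℓ, f n j ℓ = g n j ℓ) → chainAux N f i = chainAux N g i
  | 0, _ => rfl
  | (i+1), h => by
      have hy : (fun (j : Fin N) (ℓ : Fin 2) => f i j.val ℓ) = fun j ℓ => g i j.val ℓ := by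
        funext j ℓ
        exact h i (by omega) j.val j.isLt ℓ
      show nextPop N (chainAux N f i) (fun j ℓ => f i j.val ℓ)
          = nextPop N (chainAux N g i) (fun j ℓ => g i j.val ℓ)
      rw [chainAux_congr N f g i (fun n hn => h n (by omega)), hy]


section AdmLemmas

variable {p vp ε α β : ℝ} {m : ℕ} {ν : ℕ → ℤ → ℝ}

lemma adm_m_pos (hβ : 1 < β) (hp0 : 0 < p) (hν : Admissible p vp ε α β m ν) : 1 ≤ m := by
  by_contra h
  have hm0 : m = 0 := by omega
  obtain ⟨hpos, hfin, hinit, hrec, heps, hsupp, hmass⟩ := hν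
  rw [hm0] at hmass
  have h0 : ∀ x : ℤ, ν 0 x = if x = 0 then 1 else 0 := by
    intro x
    have := hinit 0 (Nat.zero_le _) x
    simpa using this
  have hsum : ∑ᶠ x : ℤ, ν 0 x = 1 := by
    have : ∑ᶠ x : ℤ, ν 0 x = ν 0 0 := by
      apply finsum_eq_single
      intro x hx
      rw [h0 x, if_neg hx]
    rw [this, h0 0, if_pos rfl]
  rw [hsum] at hmass
  linarith

lemma adm_supp (hν : Admissible p vp ε α β m ν)
    (hp0 : 0 < p) (hp1 : p < 1 / 2) (hvp1 : vp ≤ 1) (hα0 : 0 < α) (hα1 : α < vp)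
    (hβ : 1 < β) :
    ∀ i : ℕ, 1 ≤ i → i ≤ m → ∀ x : ℤ, 0 < ν i x → (vp - α) * (i : ℝ) ≤ (x : ℝ) := by
  obtain ⟨hpos, hfin, hinit, hrec, heps, hsupp, hmass⟩ := hν
  have hvpα0 : 0 < vp - α := by linarith
  have hvpα1 : vp - α ≤ 1 := by linarith
  intro i hi1 him x hx
  by_cases hq : i ≤ qval vp
  · have h := hinit i hq x
    rw [h] at hx
    by_cases hxi : x = (i : ℤ)
    · subst hxi
      push_cast
      nlinarith [Nat.cast_nonneg (α := ℝ) i]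
    · rw [if_neg hxi] at hx; exact absurd hx (lt_irrefl 0)
  · push_neg at hq
    by_cases him1 : i ≤ m - 1
    · have h := hsupp i (by omega) him1 x hx
      nlinarith [Nat.cast_nonneg (α := ℝ) i]
    · have him' : i = m := by omega
      rw [him'] at hx ⊢
      have h := hrec m (by omega) (le_refl m) x
      have hforce : 0 < ν (m - 1) (x - 1) ∨ 0 < ν (m - 1) x := by
        by_contra hc
        push_neg at hc
        have h1 : ν (m - 1) (x - 1) = 0 := le_antisymm hc.1 (hpos _ _)
        have h2 : ν (m - 1) x = 0 := le_antisymm hc.2 (hpos _ _)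
        rw [FBr, h1, h2] at h
        simp at h
        linarith
    -- q ≤ m - 1 holds since qval + 1 ≤ m
      have hqm : qval vp ≤ m - 1 := by omega
      have hm1 : ((m - 1 : ℕ) : ℝ) + 1 = (m : ℝ) := by
        have h1m : 1 ≤ m := by omega
        rw [Nat.cast_sub h1m]
        push_cast
        ring
      rcases hforce with hc | hc
      · have := hsupp (m - 1) hqm (le_refl _) (x - 1) hc
        rw [hm1] at this
        push_cast at this ⊢
        linarith
      · have := hsupp (m - 1) hqm (le_refl _) x hc
        rw [hm1] at this
        linarith

lemma adm_FBr (hν : Admissible p vp ε α β m ν) (hp0 : 0 < p) (hp1 : p < 1 / 2) :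
    ∀ i : ℕ, i + 1 ≤ m → ∀ x : ℤ, ν (i + 1) x ≤ FBr p (ν i) x := by
  obtain ⟨hpos, hfin, hinit, hrec, heps, hsupp, hmass⟩ := hν
  intro i hi x
  by_cases h : i + 1 ≤ qval vp
  · have h1 := hinit (i + 1) h x
    have h2 : ∀ z : ℤ, ν i z = if z = (i : ℤ) then (2 * p) ^ i else 0 :=
      hinit i (by omega)
    rw [h1, FBr, h2, h2]
    by_cases hx : x = (i : ℤ) + 1
    · rw [if_pos (by push_cast; omega), if_pos (by omega), if_neg (by omega)]
      rw [pow_succ]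
      apply le_of_eq
      ring
    · rw [if_neg (by push_cast; omega)]
      have hnn : ∀ z : ℤ, (0:ℝ) ≤ if z = (i:ℤ) then (2*p)^i else 0 := by
        intro z
        split
        · exact pow_nonneg (by linarith) i
        · exact le_refl 0
      nlinarith [hnn (x-1), hnn x]
  · have := hrec (i + 1) (by omega) hi x
    simpa using this


lemma sum_count_le (T : Finset ℤ) (s : Multiset ℤ) :
    ∑ x ∈ T, s.count x ≤ Multiset.card s := by
  classical
  have h1 : ∑ x ∈ T.filter (fun x => x ∈ s.toFinset), s.count x = ∑ x ∈ T, s.count x := by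
    apply Finset.sum_filter_of_ne
    intro x _ hx
    rw [Multiset.mem_toFinset]
    exact Multiset.count_pos.1 (Nat.pos_of_ne_zero hx)
  rw [← h1]
  have h2 : T.filter (fun x => x ∈ s.toFinset) ⊆ s.toFinset := by
    intro x hx
    exact (Finset.mem_filter.1 hx).2
  calc ∑ x ∈ T.filter (fun x => x ∈ s.toFinset), s.count x
      ≤ ∑ x ∈ s.toFinset, s.count x := Finset.sum_le_sum_of_subset h2
    _ = Multiset.card s := Multiset.toFinset_sum_count_eq s

/-- The deterministic core: on the event `B` intersected with all the good binomial
events, the admissible sequence forces more than `N` particles at time `m`. -/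
lemma deterministic_key
    {p vp ε α β δ : ℝ} {m N : ℕ} {ν : ℕ → ℤ → ℝ}
    (hp0 : 0 < p) (hp1 : p < 1 / 2) (hvp1 : vp ≤ 1)
    (hε : 0 < ε) (hα0 : 0 < α) (hα1 : α < vp) (hβ : 1 < β)
    (hν : Admissible p vp ε α β m ν)
    (hδ0 : 0 < δ) (hδ1 : δ < 1) (hpowm : (1 - δ) ^ m = β⁻¹)
    (hN : 1 ≤ N)
    (y : ℕ → ℕ → Fin 2 → ℤ)
    (hB : ∀ i : ℕ, 1 ≤ i → i ≤ m → ((minPop (chainAux N y i) : ℝ) < (vp - α) * (i : ℝ)))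
    (hGood : ∀ i : ℕ, i < m → ∀ x : ℤ, 0 < ν i x → ∀ d : ℤ, d = 0 ∨ d = 1 →
      ((N : ℝ) * β⁻¹ * ε ≤ (Multiset.count x (popMS (chainAux N y i)) : ℝ) →
        2 * (if d = 1 then p else 1 - p) * (1 - δ)
            * (Multiset.count x (popMS (chainAux N y i)) : ℝ)
          ≤ ((Finset.univ.filter (fun q : Fin N × Fin 2 =>
              chainAux N y i q.1 = x ∧ y i q.1.val q.2 = d)).card : ℝ))) :
    False := by
  classical
  have hpos := hν.1
  have hfin := hν.2.1
  have heps := hν.2.2.2.2.1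
  have hmass := hν.2.2.2.2.2.2
  have hsuppL := adm_supp hν hp0 hp1 hvp1 hα0 hα1 hβ
  have hFBrL := adm_FBr hν hp0 hp1
  have h1δ : (0:ℝ) < 1 - δ := by linarith
  have hβ0 : (0:ℝ) < β⁻¹ := inv_pos.2 (by linarith)
  have hβpow : ∀ i : ℕ, i ≤ m → β⁻¹ ≤ (1 - δ) ^ i := by
    intro i hi
    rw [← hpowm]
    exact pow_le_pow_of_le_one (le_of_lt h1δ) (by linarith) hi
  -- the main induction
  have main : ∀ i : ℕ, i ≤ m → ∀ x : ℤ,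
      (N : ℝ) * (1 - δ) ^ i * ν i x ≤ (Multiset.count x (popMS (chainAux N y i)) : ℝ) := by
    intro i
    induction i with
    | zero =>
      intro _ x
      have h0 : ν 0 x = if x = 0 then 1 else 0 := by
        have := hν.2.2.1 0 (Nat.zero_le _) x
        simpa using this
      have hpop : popMS (chainAux N y 0) = Multiset.replicate N (0 : ℤ) := by
        show Multiset.map (fun _ : Fin N => (0:ℤ)) Finset.univ.val = _
        rw [Multiset.map_const']
        simp
      rw [hpop, h0, pow_zero, Multiset.count_replicate]
      by_cases hx : x = 0
      · subst hx; simp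
      · simp [hx, eq_comm]
    | succ i ih =>
      intro hi1 x
      have hi : i ≤ m := by omega
      by_cases hx : 0 < ν (i + 1) x
      · -- displacement count lower bounds
        have hd : ∀ d : ℤ, d = 0 ∨ d = 1 → ∀ z : ℤ,
            2 * (if d = 1 then p else 1 - p) * (1 - δ)
                * ((N : ℝ) * (1 - δ) ^ i * ν i z)
              ≤ ((Finset.univ.filter (fun q : Fin N × Fin 2 =>
                  chainAux N y i q.1 = z ∧ y i q.1.val q.2 = d)).card : ℝ) := by
          intro d hdval z
          have hrd0 : 0 ≤ (if d = 1 then p else 1 - p) := by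
            split <;> linarith
          by_cases hz : 0 < ν i z
          · have hIHz := ih hi z
            have hn0 : (N : ℝ) * β⁻¹ * ε
                ≤ (Multiset.count z (popMS (chainAux N y i)) : ℝ) := by
              refine le_trans ?_ hIHz
              have h1 : β⁻¹ ≤ (1 - δ) ^ i := hβpow i hi
              have h2 : ε ≤ ν i z := heps i (by omega) z hz
              have hN0 : (0:ℝ) ≤ N := Nat.cast_nonneg N
              have s1 : (N:ℝ) * β⁻¹ ≤ (N:ℝ) * (1 - δ) ^ i :=
                mul_le_mul_of_nonneg_left h1 hN0
              exact mul_le_mul s1 h2 (le_of_lt hε)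
                (mul_nonneg hN0 (pow_nonneg (le_of_lt h1δ) i))
            have hgood := hGood i (by omega) z hz d hdval hn0
            refine le_trans ?_ hgood
            have hle : (N : ℝ) * (1 - δ) ^ i * ν i z
                ≤ (Multiset.count z (popMS (chainAux N y i)) : ℝ) := ih hi z
            have hc0 : 0 ≤ 2 * (if d = 1 then p else 1 - p) * (1 - δ) :=
              mul_nonneg (mul_nonneg (by norm_num) hrd0) (le_of_lt h1δ)
            exact mul_le_mul_of_nonneg_left hle hc0
          · have hz0 : ν i z = 0 := le_antisymm (not_lt.1 hz) (hpos i z)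
            rw [hz0]
            simp only [mul_zero]
            exact Nat.cast_nonneg _
        have hd1 := hd 1 (Or.inr rfl) (x - 1)
        have hd0 := hd 0 (Or.inl rfl) x
        rw [if_pos rfl] at hd1
        rw [if_neg (by omega)] at hd0
        have hcc := count_childMS_ge (chainAux N y i) (fun j ℓ => y i j.val ℓ) x
        -- selection equality
        have hstep : chainAux N y (i + 1)
            = nextPop N (chainAux N y i) (fun j ℓ => y i j.val ℓ) := rfl
        have hsupx := hsuppL (i + 1) (by omega) (by omega) x hx
        have hBB := hB (i + 1) (by omega) (by omega)
        have hmin : minPop (chainAux N y (i + 1)) < x := by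
          have : ((minPop (chainAux N y (i + 1)) : ℤ) : ℝ) < (x : ℝ) :=
            lt_of_lt_of_le hBB hsupx
          exact_mod_cast this
        have hsel : Multiset.count x (popMS (chainAux N y (i + 1)))
            = Multiset.count x (childMS (chainAux N y i) (fun j ℓ => y i j.val ℓ)) := by
          rw [hstep]
          exact count_nextPop_eq hN _ _ (by rw [← hstep]; exact hmin)
        have hFBrx := hFBrL i (by omega) x
        have hexp : (N : ℝ) * (1 - δ) ^ (i + 1) * FBr p (ν i) x
            = 2 * p * (1 - δ) * ((N : ℝ) * (1 - δ) ^ i * ν i (x - 1))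
              + 2 * (1 - p) * (1 - δ) * ((N : ℝ) * (1 - δ) ^ i * ν i x) := by
          simp only [FBr]
          rw [pow_succ]
          ring
        rw [hsel]
        calc (N : ℝ) * (1 - δ) ^ (i + 1) * ν (i + 1) x
            ≤ (N : ℝ) * (1 - δ) ^ (i + 1) * FBr p (ν i) x := by
              apply mul_le_mul_of_nonneg_left hFBrx
              exact mul_nonneg (Nat.cast_nonneg N) (pow_nonneg (le_of_lt h1δ) _)
          _ = 2 * p * (1 - δ) * ((N : ℝ) * (1 - δ) ^ i * ν i (x - 1))
              + 2 * (1 - p) * (1 - δ) * ((N : ℝ) * (1 - δ) ^ i * ν i x) := hexp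
          _ ≤ ((Finset.univ.filter (fun q : Fin N × Fin 2 =>
                  chainAux N y i q.1 = x - 1 ∧ y i q.1.val q.2 = 1)).card : ℝ)
              + ((Finset.univ.filter (fun q : Fin N × Fin 2 =>
                  chainAux N y i q.1 = x ∧ y i q.1.val q.2 = 0)).card : ℝ) :=
            add_le_add hd1 hd0
          _ ≤ (Multiset.count x (childMS (chainAux N y i) (fun j ℓ => y i j.val ℓ)) : ℝ) := by
            exact_mod_cast hcc
      · have hx0 : ν (i + 1) x = 0 := le_antisymm (not_lt.1 hx) (hpos _ _)
        rw [hx0, mul_zero]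
        exact Nat.cast_nonneg _
  -- conclusion at time m
  set T : Finset ℤ := (hfin m).toFinset with hT
  have hfs : ∑ᶠ x : ℤ, ν m x = ∑ x ∈ T, ν m x := by
    apply finsum_eq_finset_sum_of_support_subset
    rw [hT, Set.Finite.coe_toFinset]
  have hup : (∑ x ∈ T, (Multiset.count x (popMS (chainAux N y m)) : ℝ)) ≤ (N : ℝ) := by
    have h1 : ∑ x ∈ T, Multiset.count x (popMS (chainAux N y m)) ≤ N := by
      have := sum_count_le T (popMS (chainAux N y m))
      rwa [popMS_card] at this
    exact_mod_cast h1
  have hlo : (N : ℝ) * β⁻¹ * (β + 1)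
      ≤ ∑ x ∈ T, (Multiset.count x (popMS (chainAux N y m)) : ℝ) := by
    calc (N : ℝ) * β⁻¹ * (β + 1) ≤ (N : ℝ) * β⁻¹ * ∑ᶠ x : ℤ, ν m x := by
          have hN0 : (0:ℝ) ≤ (N:ℝ) * β⁻¹ := mul_nonneg (Nat.cast_nonneg N) (le_of_lt hβ0)
          exact mul_le_mul_of_nonneg_left hmass hN0
      _ = ∑ x ∈ T, (N : ℝ) * (1 - δ) ^ m * ν m x := by
          rw [hfs, Finset.mul_sum]
          apply Finset.sum_congr rfl
          intro x _
          rw [hpowm]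
      _ ≤ ∑ x ∈ T, (Multiset.count x (popMS (chainAux N y m)) : ℝ) :=
          Finset.sum_le_sum (fun x _ => main m (le_refl m) x)
  have hgt : (N : ℝ) < (N : ℝ) * β⁻¹ * (β + 1) := by
    have hβne : β ≠ 0 := by linarith
    have hid : (N : ℝ) * β⁻¹ * (β + 1) = (N : ℝ) + (N : ℝ) * β⁻¹ := by
      field_simp
    rw [hid]
    have hN1 : (1:ℝ) ≤ (N:ℝ) := by exact_mod_cast hN
    nlinarith
  linarith

end AdmLemmas


/-- Probability bound for a single bad event. -/
lemma bad_event_bound {Ω : Type*} [MeasureSpace Ω] [IsProbabilityMeasure (ℙ : Measure Ω)]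
    {p : ℝ} (hp0 : 0 < p) (hp1 : p < 1 / 2)
    (Y : ℕ × ℕ × Fin 2 → Ω → ℤ) (hYmeas : ∀ q, Measurable (Y q))
    (hiid : iIndepFun Y ℙ)
    (hlaw : ∀ q, Measure.map (Y q) ℙ = bernoulliStep p)
    (N : ℕ) (hN : 1 ≤ N) (i : ℕ) (x : ℤ) (d : ℤ) (hd : d = 0 ∨ d = 1)
    (n₀ : ℝ) (hn₀ : 0 < n₀) (δ : ℝ) (hδ0 : 0 < δ) (hδ1 : δ < 1) :
    ℙ {ω | n₀ ≤ ((Multiset.count x (popMS (chainAux N (fun n j ℓ => Y (n, j, ℓ) ω) i)) : ℕ) : ℝ)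
        ∧ (((Finset.univ.filter (fun q : Fin N × Fin 2 =>
              chainAux N (fun n j ℓ => Y (n, j, ℓ) ω) i q.1 = x
                ∧ Y (i, q.1.val, q.2) ω = d)).card : ℝ)
            < 2 * (if d = 1 then p else 1 - p) * (1 - δ)
              * ((Multiset.count x (popMS (chainAux N (fun n j ℓ => Y (n, j, ℓ) ω) i)) : ℕ) : ℝ))}
      ≤ ENNReal.ofReal (Real.exp (-n₀ * p * δ ^ 2)) := by
  classical
  set rd : ℝ := if d = 1 then p else 1 - p with hrd
  have hrdp : p ≤ rd := by rw [hrd]; split <;> linarith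
  have hrd0 : 0 < rd := by rw [hrd]; split <;> linarith
  have hrd1 : rd ≤ 1 := by rw [hrd]; split <;> linarith
  set XX : Ω → Fin N → ℤ := fun ω => chainAux N (fun n j ℓ => Y (n, j, ℓ) ω) i with hXX
  set cnt : Ω → ℕ := fun ω => Multiset.count x (popMS (XX ω)) with hcnt
  set T₁ : Finset (ℕ × ℕ × Fin 2) :=
    (Finset.range i) ×ˢ ((Finset.range N) ×ˢ (Finset.univ : Finset (Fin 2))) with hT₁
  set T₂ : Finset (ℕ × ℕ × Fin 2) :=
    ({i} : Finset ℕ) ×ˢ ((Finset.range N) ×ˢ (Finset.univ : Finset (Fin 2))) with hT₂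
  have hdisj : Disjoint T₁ T₂ := by
    rw [Finset.disjoint_left]
    intro q hq1 hq2
    rw [hT₁, Finset.mem_product] at hq1
    rw [hT₂, Finset.mem_product] at hq2
    have h1 : q.1 < i := Finset.mem_range.1 hq1.1
    have h2 : q.1 = i := Finset.mem_singleton.1 hq2.1
    omega
  set W₁ : Ω → (T₁ → ℤ) := fun ω k => Y k ω with hW₁
  set W₂ : Ω → (T₂ → ℤ) := fun ω k => Y k ω with hW₂
  have hW₁meas : Measurable W₁ := measurable_pi_lambda _ (fun k => hYmeas k)
  have hW₂meas : Measurable W₂ := measurable_pi_lambda _ (fun k => hYmeas k)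
  have hindepW : IndepFun W₁ W₂ ℙ := hiid.indepFun_finset T₁ T₂ hdisj hYmeas
  set F : (T₁ → ℤ) → (Fin N → ℤ) := fun v =>
    chainAux N (fun n j ℓ => if h : (n, j, ℓ) ∈ T₁ then v ⟨(n, j, ℓ), h⟩ else 0) i with hF
  have hFW : ∀ ω, F (W₁ ω) = XX ω := by
    intro ω
    apply chainAux_congr
    intro n hn j hj ℓ
    have hmem : (n, j, ℓ) ∈ T₁ := by
      rw [hT₁, Finset.mem_product, Finset.mem_product]
      exact ⟨Finset.mem_range.2 hn, Finset.mem_range.2 hj, Finset.mem_univ _⟩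
    rw [dif_pos hmem]
  -- the events
  set AS : Finset (Fin N) → Set Ω := fun S => {ω | ∀ j : Fin N, (F (W₁ ω) j = x ↔ j ∈ S)}
    with hAS
  set G : Finset (Fin N) → (T₂ → ℤ) → ℝ := fun S v =>
    ∑ j ∈ S, ∑ ℓ : Fin 2,
      (if h : ((i, j.val, ℓ) ∈ T₂) then (if v ⟨(i, j.val, ℓ), h⟩ = d then (1:ℝ) else 0) else 0)
    with hG
  set CS : Finset (Fin N) → Set Ω := fun S =>
    {ω | G S (W₂ ω) ≤ (1 - δ) * rd * (2 * (S.card : ℝ))} with hCS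
  have hmemT₂ : ∀ (j : Fin N) (ℓ : Fin 2), ((i, j.val, ℓ) : ℕ × ℕ × Fin 2) ∈ T₂ := by
    intro j ℓ
    rw [hT₂, Finset.mem_product]
    refine ⟨Finset.mem_singleton.2 rfl, ?_⟩
    rw [Finset.mem_product]
    exact ⟨Finset.mem_range.2 j.isLt, Finset.mem_univ _⟩
  have hGW : ∀ S (ω : Ω), G S (W₂ ω)
      = ∑ j ∈ S, ∑ ℓ : Fin 2, (if Y (i, j.val, ℓ) ω = d then (1:ℝ) else 0) := by
    intro S ω
    rw [hG]
    apply Finset.sum_congr rfl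
    intro j _
    apply Finset.sum_congr rfl
    intro ℓ _
    rw [dif_pos (hmemT₂ j ℓ)]
  -- measurability of the events
  have hASmeas : ∀ S, MeasurableSet (AS S) := by
    intro S
    have : AS S = W₁ ⁻¹' {v | ∀ j : Fin N, (F v j = x ↔ j ∈ S)} := rfl
    rw [this]
    exact hW₁meas MeasurableSet.of_discrete
  have hCSmeas : ∀ S, MeasurableSet (CS S) := by
    intro S
    have : CS S = W₂ ⁻¹' {v | G S v ≤ (1 - δ) * rd * (2 * (S.card : ℝ))} := rfl
    rw [this]
    exact hW₂meas MeasurableSet.of_discrete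
  -- independence product
  have hprod : ∀ S, ℙ (AS S ∩ CS S) = ℙ (AS S) * ℙ (CS S) := by
    intro S
    exact hindepW.measure_inter_preimage_eq_mul
      {v | ∀ j : Fin N, (F v j = x ↔ j ∈ S)}
      {v | G S v ≤ (1 - δ) * rd * (2 * (S.card : ℝ))}
      MeasurableSet.of_discrete MeasurableSet.of_discrete
  -- Chernoff bound for CS S when S is large
  have hCSbound : ∀ S : Finset (Fin N), n₀ ≤ (S.card : ℝ) →
      ℙ (CS S) ≤ ENNReal.ofReal (Real.exp (-n₀ * p * δ ^ 2)) := by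
    intro S hScard
    set ι := ↥(S ×ˢ (Finset.univ : Finset (Fin 2))) with hι
    set Z : ι → Ω → ℝ := fun k ω => if Y (i, (k : Fin N × Fin 2).1.val, (k : Fin N × Fin 2).2) ω = d
        then (1:ℝ) else 0 with hZ
    have hZmeas : ∀ k, Measurable (Z k) := by
      intro k
      apply Measurable.comp (Measurable.of_discrete (f := fun z : ℤ => if z = d then (1:ℝ) else 0))
      exact hYmeas _
    have hκinj : Function.Injective
        (fun k : ι => ((i, (k : Fin N × Fin 2).1.val, (k : Fin N × Fin 2).2) : ℕ × ℕ × Fin 2)) := by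
      intro k k' h
      simp only [Prod.mk.injEq] at h
      apply Subtype.ext
      apply Prod.ext
      · exact Fin.val_injective h.2.1
      · exact h.2.2
    have hZindep : iIndepFun Z ℙ := by
      have h1 := iIndepFun_precomp _ hκinj hiid
      exact h1.comp (fun _ => fun z : ℤ => if z = d then (1:ℝ) else 0)
        (fun _ => Measurable.of_discrete)
    have hZval : ∀ k ω, Z k ω = 0 ∨ Z k ω = 1 := by
      intro k ω
      by_cases h : Y (i, (k : Fin N × Fin 2).1.val, (k : Fin N × Fin 2).2) ω = d
      · right; simp [hZ, h]
      · left; simp [hZ, h]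
    have hZmgf : ∀ t, ∀ k : ι, mgf (Z k) ℙ t = rd * Real.exp t + (1 - rd) := by
      intro t k
      exact mgf_bernoulli_indicator (hYmeas _) (le_of_lt hp0) (by linarith)
        (hlaw _) d hd t
    have hcard : (Fintype.card ι : ℝ) = 2 * (S.card : ℝ) := by
      have h1 : Fintype.card ι = S.card * 2 := by
        rw [Fintype.card_coe, Finset.card_product]
        simp
      rw [h1]
      push_cast
      ring
    have hch := chernoff_binom Z hZmeas hZindep hZval rd hrd0 hrd1 hZmgf δ hδ0 hδ1
    have hsum : ∀ ω : Ω, (∑ k, Z k ω)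
        = ∑ j ∈ S, ∑ ℓ : Fin 2, (if Y (i, j.val, ℓ) ω = d then (1:ℝ) else 0) := by
      intro ω
      have h1 : (∑ k, Z k ω) = ∑ q ∈ S ×ˢ (Finset.univ : Finset (Fin 2)),
          (fun q : Fin N × Fin 2 => if Y (i, q.1.val, q.2) ω = d then (1:ℝ) else 0) q := by
        simp only [hZ]
        exact Finset.sum_coe_sort (S ×ˢ (Finset.univ : Finset (Fin 2)))
          (fun q : Fin N × Fin 2 => if Y (i, q.1.val, q.2) ω = d then (1:ℝ) else 0)
      rw [h1, Finset.sum_product]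
    have hseteq : CS S = {ω | (∑ k, Z k ω) ≤ (1 - δ) * rd * (Fintype.card ι : ℝ)} := by
      ext ω
      simp only [hCS, Set.mem_setOf_eq]
      rw [hGW S ω, hcard, hsum ω]
    rw [hseteq]
    refine le_trans hch (ENNReal.ofReal_le_ofReal (Real.exp_le_exp.2 ?_))
    rw [hcard]
    have h1 : n₀ * p ≤ (S.card : ℝ) * rd := by
      apply mul_le_mul hScard hrdp (le_of_lt hp0) (Nat.cast_nonneg _)
    nlinarith [sq_nonneg δ, hδ0]
  -- inclusion of the bad event in the union
  set 𝒮 : Finset (Finset (Fin N)) :=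
    Finset.univ.filter (fun S : Finset (Fin N) => n₀ ≤ (S.card : ℝ)) with h𝒮
  have hincl : {ω | n₀ ≤ ((cnt ω : ℕ) : ℝ)
        ∧ (((Finset.univ.filter (fun q : Fin N × Fin 2 =>
              XX ω q.1 = x ∧ Y (i, q.1.val, q.2) ω = d)).card : ℝ)
            < 2 * rd * (1 - δ) * ((cnt ω : ℕ) : ℝ))}
      ⊆ ⋃ S ∈ 𝒮, (AS S ∩ CS S) := by
    intro ω hω
    obtain ⟨hω1, hω2⟩ := hω
    set S : Finset (Fin N) := Finset.univ.filter (fun j => XX ω j = x) with hS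
    have hcntS : cnt ω = S.card := by
      rw [hcnt]
      show Multiset.count x (Finset.univ.val.map (XX ω)) = S.card
      rw [Multiset.count_map]
      have heq : Multiset.filter (fun a => x = XX ω a) Finset.univ.val
          = (Finset.univ.filter (fun j : Fin N => XX ω j = x)).val := by
        rw [Finset.filter_val]
        apply Multiset.filter_congr
        intro j _
        exact eq_comm
      rw [heq, Finset.card_val, hS]
    have hmemAS : ω ∈ AS S := by
      rw [hAS]
      intro j
      rw [hFW ω, hS, Finset.mem_filter]
      simp
    have hzero : ∀ j ∈ (Finset.univ : Finset (Fin N)), j ∉ S →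
        (∑ ℓ : Fin 2, (if XX ω j = x ∧ Y (i, j.val, ℓ) ω = d then (1:ℝ) else 0)) = 0 := by
      intro j _ hj
      rw [hS, Finset.mem_filter] at hj
      push_neg at hj
      have hjx : ¬ XX ω j = x := hj (Finset.mem_univ j)
      apply Finset.sum_eq_zero
      intro ℓ _
      exact if_neg (fun hc => hjx hc.1)
    have hsub := Finset.sum_subset (Finset.subset_univ S) hzero
    have hdispS : ((Finset.univ.filter (fun q : Fin N × Fin 2 =>
          XX ω q.1 = x ∧ Y (i, q.1.val, q.2) ω = d)).card : ℝ)
        = ∑ j ∈ S, ∑ ℓ : Fin 2, (if Y (i, j.val, ℓ) ω = d then (1:ℝ) else 0) := by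
      have h1 : ((Finset.univ.filter (fun q : Fin N × Fin 2 =>
          XX ω q.1 = x ∧ Y (i, q.1.val, q.2) ω = d)).card : ℝ)
          = ∑ q : Fin N × Fin 2,
            (if XX ω q.1 = x ∧ Y (i, q.1.val, q.2) ω = d then (1:ℝ) else 0) := by
        rw [Finset.card_filter]
        push_cast
        rfl
      rw [h1, Fintype.sum_prod_type]
      rw [← hsub]
      apply Finset.sum_congr rfl
      intro j hj
      rw [hS, Finset.mem_filter] at hj
      apply Finset.sum_congr rfl
      intro ℓ _
      congr 1
      rw [eq_iff_iff]
      exact ⟨fun h => h.2, fun h => ⟨hj.2, h⟩⟩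
    have hmemCS : ω ∈ CS S := by
      rw [hCS]
      show G S (W₂ ω) ≤ (1 - δ) * rd * (2 * (S.card : ℝ))
      rw [hGW S ω, ← hdispS]
      rw [hcntS] at hω2
      have hring : (1 - δ) * rd * (2 * (S.card : ℝ)) = 2 * rd * (1 - δ) * (S.card : ℝ) := by
        ring
      rw [hring]
      exact le_of_lt hω2
    have hSmem : S ∈ 𝒮 := by
      rw [h𝒮, Finset.mem_filter]
      refine ⟨Finset.mem_univ _, ?_⟩
      rw [← hcntS]
      exact hω1
    exact Set.mem_biUnion hSmem ⟨hmemAS, hmemCS⟩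
  -- pairwise disjointness of the AS
  have hASdisj : (↑𝒮 : Set (Finset (Fin N))).PairwiseDisjoint AS := by
    intro S hSmem S' hS'mem hne
    rw [Function.onFun]
    rw [Set.disjoint_left]
    intro ω hω hω'
    apply hne
    ext j
    rw [← (hω j), ← (hω' j)]
  -- put everything together
  calc ℙ _ ≤ ℙ (⋃ S ∈ 𝒮, (AS S ∩ CS S)) := measure_mono hincl
    _ ≤ ∑ S ∈ 𝒮, ℙ (AS S ∩ CS S) := measure_biUnion_finset_le _ _
    _ ≤ ∑ S ∈ 𝒮, ℙ (AS S) * ENNReal.ofReal (Real.exp (-n₀ * p * δ ^ 2)) := by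
        apply Finset.sum_le_sum
        intro S hSmem
        rw [hprod S]
        apply mul_le_mul_right
        apply hCSbound
        rw [h𝒮, Finset.mem_filter] at hSmem
        exact hSmem.2
    _ = (∑ S ∈ 𝒮, ℙ (AS S)) * ENNReal.ofReal (Real.exp (-n₀ * p * δ ^ 2)) := by
        rw [Finset.sum_mul]
    _ ≤ 1 * ENNReal.ofReal (Real.exp (-n₀ * p * δ ^ 2)) := by
        apply mul_le_mul_left
        have h1 : ∑ S ∈ 𝒮, ℙ (AS S) = ℙ (⋃ S ∈ 𝒮, AS S) :=
          (measure_biUnion_finset hASdisj (fun S _ => hASmeas S)).symm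
        rw [h1]
        exact le_trans (measure_mono (Set.subset_univ _)) (le_of_eq (measure_univ))
    _ = ENNReal.ofReal (Real.exp (-n₀ * p * δ ^ 2)) := one_mul _


/-- **Lemma (use of admissible sequences):** given an `(ε,α,β)`-admissible sequence
`ν₀, …, ν_m`, with `K = Σ_{i<m} #supp(ν_i)` and `δ = 1 − exp(−log β / m)`, the event
`B` that `min X^N_i < (v(p) − α)·i` for all `1 ≤ i ≤ m` satisfies
`P(B) ≤ 2K·exp(−N·β⁻¹·ε·p·δ²)`. -/
theorem admissible_sequence_event_bound
    (p : ℝ) (hp0 : 0 < p) (hp1 : p < 1 / 2)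
    (vp : ℝ) (hvp0 : 0 ≤ vp) (hvp1 : vp ≤ 1) (hvproot : rateFn p vp = Real.log 2)
    (ε : ℝ) (hε : 0 < ε)
    (α : ℝ) (hα0 : 0 < α) (hα1 : α < vp)
    (β : ℝ) (hβ : 1 < β)
    (m : ℕ) (hm : qval vp ≤ m)
    (ν : ℕ → ℤ → ℝ) (hν : Admissible p vp ε α β m ν)
    (Ω : Type*) [MeasureSpace Ω] [IsProbabilityMeasure (ℙ : Measure Ω)]
    (Y : ℕ → ℕ → Fin 2 → Ω → ℤ)
    (hiid : iIndepFun
      (fun q : ℕ × ℕ × Fin 2 => Y q.1 q.2.1 q.2.2) ℙ)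
    (hlaw : ∀ q : ℕ × ℕ × Fin 2, Measure.map (Y q.1 q.2.1 q.2.2) ℙ = bernoulliStep p)
    (N : ℕ) (hN : 1 ≤ N)
    (K δ : ℝ)
    (hK : K = ∑ i ∈ Finset.range m, ((Function.support (ν i)).ncard : ℝ))
    (hδ : δ = 1 - Real.exp (-(Real.log β) / m)) :
    ℙ {ω | ∀ i : ℕ, 1 ≤ i → i ≤ m → (minPop (chain N Y i ω) : ℝ) < (vp - α) * i} ≤
      ENNReal.ofReal (2 * K * Real.exp (-(N : ℝ) * β⁻¹ * ε * p * δ ^ 2)) := by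
  classical
  have hm1 : 1 ≤ m := adm_m_pos hβ hp0 hν
  have hvpα1 : vp - α ≤ 1 := by linarith
  have hlogβ : 0 < Real.log β := Real.log_pos hβ
  have hmpos : (0:ℝ) < (m:ℝ) := by exact_mod_cast hm1
  have hδ0 : 0 < δ := by
    rw [hδ]
    have h1 : Real.exp (-(Real.log β) / m) < 1 := by
      rw [Real.exp_lt_one_iff]
      apply div_neg_of_neg_of_pos (by linarith) hmpos
    linarith
  have hδ1 : δ < 1 := by
    rw [hδ]
    have := Real.exp_pos (-(Real.log β) / m)
    linarith
  have h1δeq : 1 - δ = Real.exp (-(Real.log β) / m) := by rw [hδ]; ring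
  have hpowm : (1 - δ) ^ m = β⁻¹ := by
    rw [h1δeq, ← Real.exp_nat_mul]
    have hmne : (m:ℝ) ≠ 0 := ne_of_gt hmpos
    rw [show (m:ℝ) * (-(Real.log β) / m) = -(Real.log β) by field_simp]
    rw [Real.exp_neg, Real.exp_log (by linarith)]
  -- measurable modification of the noise
  set Yfam : ℕ × ℕ × Fin 2 → Ω → ℤ := fun q => Y q.1 q.2.1 q.2.2 with hYfam
  have haem : ∀ q, AEMeasurable (Yfam q) ℙ := by
    intro q
    by_contra hc
    have h0 : Measure.map (Yfam q) ℙ = 0 := Measure.map_of_not_aemeasurable hc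
    have h1 : Measure.map (Yfam q) ℙ = bernoulliStep p := hlaw q
    have h2 : (0:ENNReal) < bernoulliStep p Set.univ := by
      rw [bernoulliStep]
      have h3 : (ENNReal.ofReal p • Measure.dirac (1:ℤ)) Set.univ = ENNReal.ofReal p := by
        simp
      have h4 : (0:ENNReal) < ENNReal.ofReal p := ENNReal.ofReal_pos.2 hp0
      calc (0:ENNReal) < ENNReal.ofReal p := h4
        _ = (ENNReal.ofReal p • Measure.dirac (1:ℤ)) Set.univ := h3.symm
        _ ≤ _ := le_of_eq_of_le rfl (Measure.le_add_right (le_refl _) Set.univ)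
    rw [← h1, h0] at h2
    simp at h2
  set Y' : ℕ × ℕ × Fin 2 → Ω → ℤ := fun q => (haem q).mk (Yfam q) with hY'
  have hY'meas : ∀ q, Measurable (Y' q) := fun q => (haem q).measurable_mk
  have hY'ae : ∀ q, Yfam q =ᵐ[ℙ] Y' q := fun q => (haem q).ae_eq_mk
  have hiid' : iIndepFun Y' ℙ := iIndepFun_congr_ae hY'ae hiid
  have hlaw' : ∀ q, Measure.map (Y' q) ℙ = bernoulliStep p := by
    intro q
    rw [← Measure.map_congr (hY'ae q)]
    exact hlaw q
  -- the exceptional null set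
  set E : Set Ω := ⋃ q : ℕ × ℕ × Fin 2, {ω | Yfam q ω ≠ Y' q ω} with hE
  have hEnull : ℙ E = 0 := by
    rw [hE]
    apply measure_iUnion_null
    intro q
    exact ae_iff.mp (hY'ae q)
  have hchain_eq : ∀ ω, ω ∉ E → ∀ i,
      chain N Y i ω = chainAux N (fun n j ℓ => Y' (n, j, ℓ) ω) i := by
    intro ω hω i
    rw [chain_eq_chainAux]
    apply chainAux_congr
    intro n _ j _ ℓ
    by_contra hne
    apply hω
    rw [hE]
    exact Set.mem_iUnion.2 ⟨(n, j, ℓ), hne⟩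
  -- pass to the modified chain
  set B' : Set Ω := {ω | ∀ i : ℕ, 1 ≤ i → i ≤ m →
      ((minPop (chainAux N (fun n j ℓ => Y' (n, j, ℓ) ω) i) : ℤ) : ℝ) < (vp - α) * i}
    with hB'
  have hBB' : ℙ {ω | ∀ i : ℕ, 1 ≤ i → i ≤ m →
      (minPop (chain N Y i ω) : ℝ) < (vp - α) * i} = ℙ B' := by
    apply measure_congr
    rw [Filter.eventuallyEq_set]
    have hEc : ∀ᵐ ω ∂ℙ, ω ∉ E := by
      rw [ae_iff]
      simpa using hEnull
    filter_upwards [hEc] with ω hω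
    simp only [Set.mem_setOf_eq, hB']
    constructor
    · intro h i h1 h2
      rw [← hchain_eq ω hω i]
      exact h i h1 h2
    · intro h i h1 h2
      have := h i h1 h2
      rwa [← hchain_eq ω hω i] at this
  set n₀ : ℝ := (N:ℝ) * β⁻¹ * ε with hn₀def
  have hβinv0 : (0:ℝ) < β⁻¹ := inv_pos.2 (by linarith)
  have hN0 : (0:ℝ) < (N:ℝ) := by exact_mod_cast hN
  have hn₀pos : 0 < n₀ := by
    rw [hn₀def]
    exact mul_pos (mul_pos hN0 hβinv0) hε
  set Bad : ℕ → ℤ → ℤ → Set Ω := fun i x d =>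
    {ω | n₀ ≤ ((Multiset.count x (popMS (chainAux N (fun n j ℓ => Y' (n, j, ℓ) ω) i)) : ℕ) : ℝ)
        ∧ (((Finset.univ.filter (fun q : Fin N × Fin 2 =>
              chainAux N (fun n j ℓ => Y' (n, j, ℓ) ω) i q.1 = x
                ∧ Y' (i, q.1.val, q.2) ω = d)).card : ℝ)
            < 2 * (if d = 1 then p else 1 - p) * (1 - δ)
              * ((Multiset.count x (popMS (chainAux N (fun n j ℓ => Y' (n, j, ℓ) ω) i)) : ℕ) : ℝ))}
    with hBadDef
  have hfin := hν.2.1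
  have hBsub : B' ⊆ ⋃ i ∈ Finset.range m, ⋃ x ∈ (hfin i).toFinset,
      ⋃ d ∈ ({0, 1} : Finset ℤ), Bad i x d := by
    intro ω hω
    by_contra hc
    simp only [Set.mem_iUnion, not_exists] at hc
    refine deterministic_key hp0 hp1 hvp1 hε hα0 hα1 hβ hν hδ0 hδ1 hpowm hN
      (fun n j ℓ => Y' (n, j, ℓ) ω) (fun i h1 h2 => hω i h1 h2) ?_
    intro i hi x hx d hd hcnt
    have hxmem : x ∈ (hfin i).toFinset := by
      rw [Set.Finite.mem_toFinset, Function.mem_support]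
      exact ne_of_gt hx
    have hdmem : d ∈ ({0, 1} : Finset ℤ) := by
      rcases hd with h | h <;> subst h <;> simp
    have hnotbad : ω ∉ Bad i x d := by
      intro hmem
      exact hc i (Finset.mem_range.2 hi) x hxmem d hdmem hmem
    rw [hBadDef, Set.mem_setOf_eq, not_and, not_lt] at hnotbad
    exact hnotbad hcnt
  have hBadBound : ∀ i x d, d = 0 ∨ d = 1 →
      ℙ (Bad i x d) ≤ ENNReal.ofReal (Real.exp (-n₀ * p * δ ^ 2)) := by
    intro i x d hd
    exact bad_event_bound hp0 hp1 Y' hY'meas hiid' hlaw' N hN i x d hd n₀ hn₀pos δ hδ0 hδ1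
  set c : ENNReal := ENNReal.ofReal (Real.exp (-n₀ * p * δ ^ 2)) with hc
  have hcount : ∀ i, ∑ x ∈ (hfin i).toFinset, ∑ d ∈ ({0, 1} : Finset ℤ), c
      = (((hfin i).toFinset.card : ℕ) : ENNReal) * (2 * c) := by
    intro i
    rw [Finset.sum_const, Finset.sum_const]
    have h2 : ({0, 1} : Finset ℤ).card = 2 := rfl
    rw [h2, nsmul_eq_mul, nsmul_eq_mul]
    push_cast
    ring
  calc ℙ {ω | ∀ i : ℕ, 1 ≤ i → i ≤ m → (minPop (chain N Y i ω) : ℝ) < (vp - α) * i}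
      = ℙ B' := hBB'
    _ ≤ ℙ (⋃ i ∈ Finset.range m, ⋃ x ∈ (hfin i).toFinset,
        ⋃ d ∈ ({0, 1} : Finset ℤ), Bad i x d) := measure_mono hBsub
    _ ≤ ∑ i ∈ Finset.range m, ℙ (⋃ x ∈ (hfin i).toFinset,
        ⋃ d ∈ ({0, 1} : Finset ℤ), Bad i x d) := measure_biUnion_finset_le _ _
    _ ≤ ∑ i ∈ Finset.range m, ∑ x ∈ (hfin i).toFinset,
        ℙ (⋃ d ∈ ({0, 1} : Finset ℤ), Bad i x d) :=
        Finset.sum_le_sum (fun i _ => measure_biUnion_finset_le _ _)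
    _ ≤ ∑ i ∈ Finset.range m, ∑ x ∈ (hfin i).toFinset, ∑ d ∈ ({0, 1} : Finset ℤ),
        ℙ (Bad i x d) :=
        Finset.sum_le_sum (fun i _ => Finset.sum_le_sum (fun x _ =>
          measure_biUnion_finset_le _ _))
    _ ≤ ∑ i ∈ Finset.range m, ∑ x ∈ (hfin i).toFinset, ∑ d ∈ ({0, 1} : Finset ℤ), c := by
        apply Finset.sum_le_sum
        intro i _
        apply Finset.sum_le_sum
        intro x _
        apply Finset.sum_le_sum
        intro d hdmem
        apply hBadBound
        simp only [Finset.mem_insert, Finset.mem_singleton] at hdmem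
        exact hdmem
    _ = ∑ i ∈ Finset.range m, (((hfin i).toFinset.card : ℕ) : ENNReal) * (2 * c) := by
        apply Finset.sum_congr rfl
        intro i _
        exact hcount i
    _ = (∑ i ∈ Finset.range m, (((hfin i).toFinset.card : ℕ) : ENNReal)) * (2 * c) := by
        rw [Finset.sum_mul]
    _ ≤ ENNReal.ofReal (2 * K * Real.exp (-(N : ℝ) * β⁻¹ * ε * p * δ ^ 2)) := by
        have hKeq : K = ∑ i ∈ Finset.range m, (((hfin i).toFinset.card : ℕ) : ℝ) := by
          rw [hK]
          apply Finset.sum_congr rfl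
          intro i _
          congr 1
          exact Set.ncard_eq_toFinset_card _ (hfin i)
        have hexpeq : -n₀ * p * δ ^ 2 = -(N : ℝ) * β⁻¹ * ε * p * δ ^ 2 := by
          rw [hn₀def]; ring
        have hsumcast : (∑ i ∈ Finset.range m, (((hfin i).toFinset.card : ℕ) : ENNReal))
            = ENNReal.ofReal K := by
          rw [hKeq]
          rw [ENNReal.ofReal_sum_of_nonneg (fun i _ => Nat.cast_nonneg _)]
          apply Finset.sum_congr rfl
          intro i _
          rw [ENNReal.ofReal_natCast]
        have hK0 : 0 ≤ K := by
          rw [hKeq]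
          exact Finset.sum_nonneg (fun i _ => Nat.cast_nonneg _)
        rw [hsumcast, hc, hexpeq]
        rw [show (2:ENNReal) = ENNReal.ofReal 2 from (ENNReal.ofReal_ofNat 2).symm]
        rw [← ENNReal.ofReal_mul (by norm_num), ← ENNReal.ofReal_mul hK0]
        apply ENNReal.ofReal_le_ofReal
        apply le_of_eq
        ring

end
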